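/- Let H be a free ℤ-module of finite rank with a unimodular symmetric (or skew-symmetric) bilinear form, and let H₁ ⊆ H be a primitive sublattice such that the restriction of the form to H₁ has even discriminant (e.g., the restricted Gram matrix is 4 times a unimodular form). If φ : H → H is a ℤ-linear endomorphism preserving the form that acts as λ·id on H₁ and as 0 on the orthogonal complement H₁⊥, and H₁ ⊕ H₁⊥ has finite index in H, then λ is even. -/

import Mathlib

/-- Parity lemma: if `H` is a unimodular lattice, `H₁ ⊆ H` a nonzero primitive sublattice
on which the form restricts to `4` times a unimodular pairing, and `φ : H → H` acts as
`λ·id` on `H₁` and as `0` on `H₁⊥`, with `H₁ ⊕ H₁⊥` of finite index in `H`, then `λ` is even. -/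
theorem stmt_6 (H : Type*) [AddCommGroup H] [Module ℤ H]
    [Module.Free ℤ H] [Module.Finite ℤ H]
    (ω : LinearMap.BilinForm ℤ H) (hω : Function.Bijective ω)
    (hsym : ω.IsSymm ∨ ω.IsAlt)
    (H₁ : Submodule ℤ H) (hne : H₁ ≠ ⊥)
    (hprim : ∀ (n : ℤ) (x : H), n ≠ 0 → n • x ∈ H₁ → x ∈ H₁)
    (B₁ : LinearMap.BilinForm ℤ H₁) (hB₁ : Function.Bijective B₁)
    (hres : ∀ x y : H₁, ω (x : H) (y : H) = 4 * B₁ x y)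
    (lam : ℤ) (φ : H →ₗ[ℤ] H)
    (hφ1 : ∀ x ∈ H₁, φ x = lam • x)
    (hφ2 : ∀ y : H, (∀ x ∈ H₁, ω y x = 0) → φ y = 0)
    (hfin : ∀ z : H, ∃ k : ℤ, k ≠ 0 ∧ k • z ∈ H₁ ⊔ ω.orthogonal H₁) :
    2 ∣ lam := by
  have hrefl : ω.IsRefl := hsym.elim (fun h => h.isRefl) (fun h => h.isRefl)
  -- Claim A: ∀ z, w ∈ H₁, 4 ∣ lam * ω z w
  have claimA : ∀ (z : H), ∀ w ∈ H₁, (4:ℤ) ∣ lam * ω z w := by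
    intro z w hw
    obtain ⟨k, hk0, hk⟩ := hfin z
    obtain ⟨x, hx, y, hy, hxy⟩ := Submodule.mem_sup.1 hk
    have hyorth : ∀ n ∈ H₁, ω n y = 0 := fun n hn =>
      (LinearMap.BilinForm.mem_orthogonal_iff.1 hy) n hn
    have hφy : φ y = 0 := hφ2 y (fun n hn => hrefl n y (hyorth n hn))
    have hkφ : k • φ z = lam • x := by
      have h := congrArg φ hxy
      rw [map_add, hφy, add_zero, hφ1 x hx, map_zsmul] at h
      exact h.symm
    have hφzH₁ : φ z ∈ H₁ := by
      refine hprim k (φ z) hk0 ?_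
      rw [hkφ]
      exact H₁.toAddSubgroup.zsmul_mem hx lam
    have hxw : ω x w = k * ω z w := by
      have h := congrArg (fun t => ω t w) hxy
      simp only [map_add, LinearMap.add_apply, map_zsmul, smul_eq_mul,
        LinearMap.smul_apply] at h
      rw [hrefl w y (hyorth w hw), add_zero] at h
      exact h
    have key2 : lam * ω z w = ω (φ z) w := by
      have h := congrArg (fun t => ω t w) hkφ
      simp only [map_zsmul, LinearMap.smul_apply, smul_eq_mul] at h
      rw [hxw] at h
      have : k * ω (φ z) w = k * (lam * ω z w) := by rw [h]; ring
      exact (mul_left_cancel₀ hk0 this).symm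
    rw [key2, hres ⟨φ z, hφzH₁⟩ ⟨w, hw⟩]
    exact ⟨_, rfl⟩
  by_contra hodd
  -- then 2 ∣ ω z w for all z, w ∈ H₁
  have hωeven : ∀ (z : H), ∀ w ∈ H₁, (2:ℤ) ∣ ω z w := by
    intro z w hw
    obtain ⟨c, hc⟩ := claimA z w hw
    rcases Int.even_or_odd lam with he | ho
    · exact absurd he.two_dvd hodd
    · obtain ⟨m, hm⟩ := ho
      refine ⟨2 * c - m * ω z w, ?_⟩
      have h2 : (2 * m + 1) * ω z w = 4 * c := by rw [← hm, hc]
      linarith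
  -- halving: every w ∈ H₁ is v + v with v ∈ H₁
  have hhalf : ∀ w ∈ H₁, ∃ v ∈ H₁, w = v + v := by
    intro w hw
    set g : H →ₗ[ℤ] ℤ :=
      { toFun := fun z => ω z w / 2
        map_add' := by
          intro a b
          obtain ⟨p, hp⟩ := hωeven a w hw
          obtain ⟨q, hq⟩ := hωeven b w hw
          simp only [map_add, LinearMap.add_apply, hp, hq]
          omega
        map_smul' := by
          intro c a
          obtain ⟨p, hp⟩ := hωeven a w hw
          simp only [map_smul, LinearMap.smul_apply, RingHom.id_apply,
            smul_eq_mul, hp]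
          rw [Int.mul_ediv_cancel_left p (by norm_num), show c * (2 * p) = 2 * (c * p) by ring,
            Int.mul_ediv_cancel_left (c * p) (by norm_num)] } with hg
    obtain ⟨v, hv⟩ := hω.2 g
    have hvz : ∀ z : H, 2 * ω v z = ω z w := by
      intro z
      obtain ⟨p, hp⟩ := hωeven z w hw
      have : ω v z = g z := by rw [← hv]
      rw [this]
      simp only [hg, LinearMap.coe_mk, AddHom.coe_mk, hp]
      omega
    -- pick u = v (symmetric case) or u = -v (alternating case)
    obtain ⟨u, hu⟩ : ∃ u : H, ∀ z : H, ω z u = ω v z := by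
      rcases hsym with hs | ha
      · refine ⟨v, fun z => ?_⟩
        have h : ω v z = ω z v := by simpa using hs.eq v z
        exact h.symm
      · refine ⟨-v, fun z => ?_⟩
        rw [map_neg]
        exact LinearMap.IsAlt.neg ha z v
    have hzero : ∀ z : H, ω (w - (u + u)) z = 0 := by
      intro z
      have h1 : ω z (u + u) = ω z w := by
        rw [map_add, hu z]; linarith [hvz z]
      have h2 : ω z (w - (u + u)) = 0 := by
        rw [map_sub, h1, sub_self]
      exact hrefl z _ h2
    have hker : w - (u + u) = 0 := by
      have : ω (w - (u + u)) = ω 0 := by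
        ext z; rw [map_zero]; exact hzero z
      exact hω.1 this
    have hveq : w = u + u := by
      have := hker; linear_combination (norm := abel) this
    have hvmem : u ∈ H₁ := by
      refine hprim 2 u (by norm_num) ?_
      rw [two_zsmul, ← hveq]; exact hw
    exact ⟨u, hvmem, hveq⟩
  -- descent: contradiction with hne
  obtain ⟨w₀, hw₀, hw₀ne⟩ := Submodule.exists_mem_ne_zero_of_ne_bot hne
  let b := Module.Free.chooseBasis ℤ H
  obtain ⟨i, hi⟩ : ∃ i, b.repr w₀ i ≠ 0 := by
    by_contra hcon
    push_neg at hcon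
    apply hw₀ne
    have : b.repr w₀ = 0 := Finsupp.ext hcon
    simpa using congrArg b.repr.symm this
  have hdesc : ∀ n : ℕ, ∃ v ∈ H₁, b.repr w₀ i = 2 ^ n * b.repr v i := by
    intro n
    induction n with
    | zero => exact ⟨w₀, hw₀, by ring⟩
    | succ m ih =>
      obtain ⟨v, hv, hrep⟩ := ih
      obtain ⟨v', hv', hveq⟩ := hhalf v hv
      refine ⟨v', hv', ?_⟩
      rw [hrep, hveq, map_add, Finsupp.add_apply]
      ring
  obtain ⟨v, -, hrep⟩ := hdesc (b.repr w₀ i).natAbs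
  have hdvd : (2:ℤ) ^ (b.repr w₀ i).natAbs ∣ b.repr w₀ i := ⟨_, hrep⟩
  have hle : (2:ℤ) ^ (b.repr w₀ i).natAbs ≤ |b.repr w₀ i| := by
    refine Int.le_of_dvd (abs_pos.2 hi) (hdvd.trans (self_dvd_abs _))
  have hlt : |b.repr w₀ i| < (2:ℤ) ^ (b.repr w₀ i).natAbs := by
    rw [Int.abs_eq_natAbs]
    exact_mod_cast (Nat.lt_two_pow_self (n := _))
  linarith
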